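/- The product over all compositions (β_1,...,β_k) of n into k non-negative parts of β_1!·β_2!···β_k! equals the product over i from 1 to n of i raised to the power k·binom(n+k-i-1, k-1). -/
import Mathlib


open Finset

/-- The polynomial binomial coefficient `y(y-1)⋯(y-m+1)/m!`. -/
noncomputable def bch {F : Type*} [Field F] (y : F) (m : ℕ) : F :=
  (∏ j ∈ Finset.range m, (y - (j : F))) / (m.factorial : F)

/-- Compositions of `n` into `k` non-negative parts. -/
abbrev Comp (n k : ℕ) := {f : Fin k → Fin (n + 1) // ∑ i, (f i : ℕ) = n}

/-- Compositions of `n` into `k` strictly positive parts. -/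
abbrev CompPos (n k : ℕ) :=
  {f : Fin k → Fin (n + 1) // (∑ i, (f i : ℕ)) = n ∧ ∀ i, 0 < (f i : ℕ)}


lemma card_natcomp (k N : ℕ) (hk : 0 < k) :
    Nat.card {f : Fin k → ℕ // ∑ j, f j = N} = (N + k - 1).choose (k - 1) := by
  classical
  rw [Nat.card_congr (Sym.equivNatSumOfFintype (Fin k) N).symm,
    Nat.card_eq_fintype_card, Sym.card_sym_eq_choose, Fintype.card_fin]
  have h1 : N ≤ k + N - 1 := by omega
  rw [← Nat.choose_symm h1]
  congr 1 <;> omega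

lemma card_slice (n k m : ℕ) (hm : 1 ≤ m) (hmn : m ≤ n) (i : Fin k) (hk : 0 < k) :
    Nat.card {β : Comp n k // m ≤ (β.1 i : ℕ)} = (n + k - m - 1).choose (k - 1) := by
  classical
  have hbound : ∀ (f : {f : Fin k → ℕ // ∑ j, f j = n - m}) (j : Fin k),
      f.1 j + (if j = i then m else 0) < n + 1 := by
    intro f j
    have hle : f.1 j ≤ n - m := by
      have h := Finset.single_le_sum (f := f.1) (fun _ _ => Nat.zero_le _) (Finset.mem_univ j)
      rwa [f.2] at h
    split <;> omega
  have hite : ∀ j : Fin k, (if j = i then m else (0:ℕ)) ≤ m := by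
    intro j; split <;> omega
  have e : {β : Comp n k // m ≤ (β.1 i : ℕ)} ≃ {f : Fin k → ℕ // ∑ j, f j = n - m} := by
    refine ⟨fun β => ⟨fun j => if j = i then (β.1.1 i : ℕ) - m else (β.1.1 j : ℕ), ?_⟩,
      fun f => ⟨⟨fun j => ⟨f.1 j + (if j = i then m else 0), hbound f j⟩, ?_⟩, ?_⟩, ?_, ?_⟩
    · have hb := β.2
      have hs := β.1.2
      have h1 : ∑ j, ((if j = i then (β.1.1 i : ℕ) - m else (β.1.1 j : ℕ))
          + (if j = i then m else 0)) = n := by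
        refine Eq.trans (Finset.sum_congr rfl fun j _ => ?_) hs
        by_cases h : j = i
        · subst h; simp; omega
        · simp [h]
      rw [Finset.sum_add_distrib] at h1
      have h2 : ∑ j : Fin k, (if j = i then m else (0:ℕ)) = m := by simp
      rw [h2] at h1
      show ∑ j, (if j = i then (β.1.1 i : ℕ) - m else (β.1.1 j : ℕ)) = n - m
      omega
    · show ∑ j, (f.1 j + (if j = i then m else 0)) = n
      rw [Finset.sum_add_distrib, f.2]
      have h2 : ∑ j : Fin k, (if j = i then m else (0:ℕ)) = m := by simp
      rw [h2]
      omega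
    · show m ≤ f.1 i + (if i = i then m else 0)
      simp
    · intro β
      have hb := β.2
      refine Subtype.ext (Subtype.ext (funext fun j => Fin.ext ?_))
      show (if j = i then (β.1.1 i : ℕ) - m else (β.1.1 j : ℕ)) + (if j = i then m else 0)
          = (β.1.1 j : ℕ)
      by_cases h : j = i
      · subst h; simp; omega
      · simp [h]
    · intro f
      refine Subtype.ext (funext fun j => ?_)
      by_cases h : j = i
      · subst h; simp
      · simp [h]
  rw [Nat.card_congr e, card_natcomp k (n - m) hk]
  congr 1
  omega

theorem stmt1 (n k : ℕ) :
    ∏ β : Comp n k, ∏ i, Nat.factorial (β.1 i) =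
      ∏ i ∈ Finset.Icc 1 n, i ^ (k * (n + k - i - 1).choose (k - 1)) := by
  classical
  rcases Nat.eq_zero_or_pos k with hk | hk
  · subst hk; simp
  have hfact : ∀ b : ℕ, b ≤ n →
      b.factorial = ∏ m ∈ Icc 1 n, m ^ (if m ≤ b then 1 else 0) := by
    intro b hb
    have h1 : ∏ m ∈ Icc 1 n, m ^ (if m ≤ b then 1 else 0)
        = ∏ m ∈ (Icc 1 n).filter (· ≤ b), m := by
      rw [Finset.prod_filter]
      refine Finset.prod_congr rfl fun m _ => ?_
      split <;> simp
    have h2 : (Icc 1 n).filter (· ≤ b) = Icc 1 b := by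
      ext x
      simp only [Finset.mem_filter, Finset.mem_Icc]
      constructor
      · rintro ⟨⟨h3, h4⟩, h5⟩; exact ⟨h3, h5⟩
      · rintro ⟨h3, h5⟩; exact ⟨⟨h3, le_trans h5 hb⟩, h5⟩
    rw [h1, h2, ← Finset.Ico_add_one_right_eq_Icc, Finset.prod_Ico_id_eq_factorial]
  calc ∏ β : Comp n k, ∏ i, Nat.factorial (β.1 i)
      = ∏ β : Comp n k, ∏ i, ∏ m ∈ Icc 1 n, m ^ (if m ≤ (β.1 i : ℕ) then 1 else 0) := by
        refine Finset.prod_congr rfl fun β _ => Finset.prod_congr rfl fun i _ => ?_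
        exact hfact _ (Nat.lt_succ_iff.mp (β.1 i).isLt)
    _ = ∏ m ∈ Icc 1 n, m ^ (∑ β : Comp n k, ∑ i, if m ≤ (β.1 i : ℕ) then 1 else 0) := by
        have hswap : ∀ β : Comp n k,
            (∏ i : Fin k, ∏ m ∈ Icc 1 n, m ^ (if m ≤ (β.1 i : ℕ) then 1 else 0))
              = ∏ m ∈ Icc 1 n, ∏ i : Fin k, m ^ (if m ≤ (β.1 i : ℕ) then 1 else 0) :=
          fun β => Finset.prod_comm
        rw [Finset.prod_congr rfl fun β _ => hswap β, Finset.prod_comm]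
        refine Finset.prod_congr rfl fun m _ => ?_
        rw [Finset.prod_congr rfl fun (β : Comp n k) _ => Finset.prod_pow_eq_pow_sum
          Finset.univ (fun i => if m ≤ (β.1 i : ℕ) then 1 else 0) m,
          Finset.prod_pow_eq_pow_sum]
    _ = ∏ m ∈ Icc 1 n, m ^ (k * (n + k - m - 1).choose (k - 1)) := by
        refine Finset.prod_congr rfl fun m hm => ?_
        rw [Finset.mem_Icc] at hm
        congr 1
        rw [Finset.sum_comm]
        have key : ∀ i : Fin k,
            (∑ β : Comp n k, if m ≤ (β.1 i : ℕ) then 1 else 0)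
              = (n + k - m - 1).choose (k - 1) := by
          intro i
          rw [← Finset.card_filter, ← Fintype.card_subtype, ← Nat.card_eq_fintype_card]
          exact card_slice n k m hm.1 hm.2 i hk
        rw [Finset.sum_congr rfl fun i _ => key i, Finset.sum_const, Finset.card_univ,
          Fintype.card_fin, smul_eq_mul]
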